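/- Fix an integer d ≥ 1 and define size_d : ℕ → ℕ by size_d(n) = max over 0 ≤ m ≤ n of |succ_d^[m](0_d)|₁. Then for every n ∈ ℕ: d·n^{1/d} − 2d ≤ size_d(n) and size_d(n) ≤ d·(d!)^{1/d}·n^{1/d} + d, where the powers are real powers with exponent 1/d. (These bounds express that size_d is equivalent to n^{1/d} up to multiplicative constants and constant shifts.) -/

import Mathlib

namespace CounterValues

/-- Successor on reversed tuples (last coordinate first): increment the first entry if it is
strictly below the next one, otherwise zero it and recurse on the tail. -/
def rsucc : List ℕ → List ℕ
  | [] => []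
  | [i] => [i + 1]
  | i :: j :: rest => if i < j then (i + 1) :: j :: rest else 0 :: rsucc (j :: rest)

/-- The successor function `succ_d` on tuples `(i₁, …, i_d)` (written in natural order):
increment the last coordinate if it is strictly smaller than the previous one, otherwise
zero it and apply the successor to the prefix. -/
def succd (l : List ℕ) : List ℕ := (rsucc l.reverse).reverse

/-- The all-zero tuple `0_d`. -/
def zeroTuple (d : ℕ) : List ℕ := List.replicate d 0

/-- `size_d(n)`: the maximal ℓ¹-norm of `succ_d^[m](0_d)` over `0 ≤ m ≤ n`. -/
def sized (d n : ℕ) : ℕ :=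
  (Finset.range (n + 1)).sup (fun m => (succd^[m] (zeroTuple d)).sum)

/-- `size_d` is equivalent to `n^{1/d}`:
`d·n^{1/d} − 2d ≤ size_d(n) ≤ d·(d!)^{1/d}·n^{1/d} + d`. -/
theorem rsucc_length (l : List ℕ) : (rsucc l).length = l.length := by
  induction l with
  | nil => rfl
  | cons a rest ih =>
    cases rest with
    | nil => rfl
    | cons b r =>
      rw [rsucc]
      split
      · rfl
      · simpa [rsucc] using ih

theorem rsucc_sorted {l : List ℕ} (h : l.Pairwise (· ≤ ·)) : (rsucc l).Pairwise (· ≤ ·) := by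
  induction l with
  | nil => simpa [rsucc] using h
  | cons a rest ih =>
    cases rest with
    | nil => simp [rsucc]
    | cons b r =>
      rw [List.pairwise_cons] at h
      obtain ⟨ha, hbr⟩ := h
      rw [rsucc]
      split
      · rename_i hab
        rw [List.pairwise_cons]
        refine ⟨?_, hbr⟩
        intro x hx
        rcases List.mem_cons.mp hx with rfl | hx
        · omega
        · have := (List.pairwise_cons.mp hbr).1 x hx
          omega
      · rw [List.pairwise_cons]
        exact ⟨fun x _ => Nat.zero_le x, ih hbr⟩

theorem rsucc_bounded {K : ℕ} : ∀ {l : List ℕ}, l.Pairwise (· ≤ ·) → (∀ x ∈ l, x ≤ K) →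
    l ≠ List.replicate l.length K → ∀ x ∈ rsucc l, x ≤ K := by
  intro l
  induction l with
  | nil => intro _ _ _ x hx; simp [rsucc] at hx
  | cons a rest ih =>
    intro hs hb hne x hx
    cases rest with
    | nil =>
      have haK : a < K := by
        have := hb a (by simp)
        rcases Nat.lt_or_ge a K with h | h
        · exact h
        · exfalso; apply hne; have : a = K := by omega
          simp [this]
      simp [rsucc] at hx
      omega
    | cons b r =>
      rw [rsucc] at hx
      split at hx
      · rename_i hab
        rcases List.mem_cons.mp hx with rfl | hx2
        · have := hb b (by simp); omega
        · exact hb x (List.mem_cons_of_mem _ hx2)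
      · rename_i hab
        have hab' : a = b := le_antisymm ((List.pairwise_cons.mp hs).1 b (by simp)) (by omega)
        rcases List.mem_cons.mp hx with rfl | hx2
        · exact Nat.zero_le K
        · apply ih (List.pairwise_cons.mp hs).2 (fun y hy => hb y (List.mem_cons_of_mem _ hy)) ?_ x hx2
          intro hc
          apply hne
          have hlen : (b :: r).length = r.length + 1 := by simp
          rw [hlen, List.replicate_succ] at hc
          obtain ⟨hbK, hr⟩ := List.cons.inj hc
          have hlen2 : (a :: b :: r).length = r.length + 2 := by simp
          rw [hlen2]
          rw [show r.length + 2 = (r.length+1)+1 from rfl, List.replicate_succ, List.replicate_succ]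
          subst hab' hbK
          rw [← hr]

def pos' : ℕ → List ℕ → ℕ
  | _, [] => 0
  | j, a :: rest => Nat.choose (a + j) (j + 1) + pos' (j+1) rest

theorem pos'_rsucc : ∀ (rest : List ℕ) (a j : ℕ), (a :: rest).Pairwise (· ≤ ·) →
    pos' j (rsucc (a :: rest)) = pos' j (a :: rest) + Nat.choose (a + j) j := by
  intro rest
  induction rest with
  | nil =>
    intro a j _
    show pos' j [a+1] = pos' j [a] + _
    simp only [pos']
    have h : a + 1 + j = (a + j) + 1 := by omega
    rw [h, Nat.choose_succ_succ, Nat.succ_eq_add_one]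
    omega
  | cons b r ih =>
    intro a j h
    rw [List.pairwise_cons] at h
    have hab : a ≤ b := h.1 b (by simp)
    by_cases hlt : a < b
    · rw [rsucc, if_pos hlt]
      simp only [pos']
      have h1 : a + 1 + j = (a + j) + 1 := by omega
      rw [h1, Nat.choose_succ_succ, Nat.succ_eq_add_one]
      omega
    · have hab' : a = b := le_antisymm hab (by omega)
      rw [rsucc, if_neg hlt]
      simp only [pos']
      rw [ih b (j+1) h.2]
      simp only [pos']
      have h1 : Nat.choose (0 + j) (j+1) = 0 := by
        apply Nat.choose_eq_zero_of_lt; omega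
      have h2 : Nat.choose (b + (j+1)) (j+1) = Nat.choose (a + j) (j+1) + Nat.choose (a + j) j := by
        subst hab'
        have h3 : a + (j+1) = (a + j) + 1 := by omega
        rw [h3, Nat.choose_succ_succ, Nat.succ_eq_add_one]
        omega
      omega

theorem pos'_replicate : ∀ (e k j : ℕ),
    pos' j (List.replicate e k) + Nat.choose (k + j) j = Nat.choose (k + j + e) (j + e) := by
  intro e
  induction e with
  | zero => intro k j; simp [pos']
  | succ e ih =>
    intro k j
    rw [List.replicate_succ]
    simp only [pos']
    have h := ih k (j+1)
    have e1 : k + (j+1) = k + j + 1 := by omega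
    have e2 : k + j + 1 + e = k + j + (e+1) := by omega
    have e3 : j + 1 + e = j + (e+1) := by omega
    rw [e1, e2, e3] at h
    have hp : Nat.choose (k+j) (j+1) + Nat.choose (k+j) j = Nat.choose (k+j+1) (j+1) := by
      rw [show k+j+1 = (k+j)+1 from rfl, Nat.choose_succ_succ, Nat.succ_eq_add_one]; omega
    omega

theorem pos'_ge_last : ∀ (rest : List ℕ) (a j : ℕ),
    Nat.choose ((a :: rest).getLast (by simp) + j + rest.length) (j + rest.length + 1)
      ≤ pos' j (a :: rest) := by
  intro rest
  induction rest with
  | nil => intro a j; simp [pos']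
  | cons b r ih =>
    intro a j
    have h := ih b (j+1)
    simp only [pos']
    have hl : (a :: b :: r).getLast (by simp) = (b :: r).getLast (by simp) := by
      simp [List.getLast_cons]
    rw [hl]
    simp only [pos'] at h
    have e1 : (b :: r).getLast (by simp) + (j+1) + r.length
        = (b :: r).getLast (by simp) + j + (b :: r).length := by simp; omega
    have e2 : j + 1 + r.length + 1 = j + (b :: r).length + 1 := by simp; omega
    rw [e1, e2] at h
    omega

theorem sum_le_length_mul_getLast : ∀ (rest : List ℕ) (a : ℕ), (a :: rest).Pairwise (· ≤ ·) →
    (a :: rest).sum ≤ (a :: rest).length * (a :: rest).getLast (by simp) := by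
  intro rest
  induction rest with
  | nil => intro a _; simp
  | cons b r ih =>
    intro a h
    rw [List.pairwise_cons] at h
    have h2 := ih b h.2
    have ha : a ≤ (b :: r).getLast (by simp) := h.1 _ (List.getLast_mem (by simp))
    rw [List.sum_cons]
    have hl : (a :: b :: r).getLast (by simp) = (b :: r).getLast (by simp) := by
      simp [List.getLast_cons]
    rw [hl]
    calc a + (b :: r).sum ≤ (b :: r).getLast (by simp) + (b :: r).length * (b :: r).getLast (by simp) :=
          Nat.add_le_add ha h2
      _ = ((b :: r).length + 1) * (b :: r).getLast (by simp) := by ring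
      _ = (a :: b :: r).length * (b :: r).getLast (by simp) := by simp

theorem iter_facts (e : ℕ) (he : 1 ≤ e) : ∀ m : ℕ,
    (rsucc^[m] (List.replicate e 0)).Pairwise (· ≤ ·) ∧
    (rsucc^[m] (List.replicate e 0)).length = e ∧
    pos' 0 (rsucc^[m] (List.replicate e 0)) = m := by
  intro m
  induction m with
  | zero =>
    refine ⟨by simp, by simp, ?_⟩
    have h := pos'_replicate e 0 0
    simp only [Function.iterate_zero, id_eq]
    norm_num [Nat.choose_self] at h
    omega
  | succ m ih =>
    rw [Function.iterate_succ_apply']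
    obtain ⟨hs, hlen, hpos⟩ := ih
    have hne : rsucc^[m] (List.replicate e 0) ≠ [] := by
      intro h; rw [h] at hlen; simp at hlen; omega
    obtain ⟨a, rest, hcons⟩ := List.exists_cons_of_ne_nil hne
    rw [hcons] at hs hpos ⊢
    refine ⟨rsucc_sorted hs, ?_, ?_⟩
    · rw [rsucc_length]; rw [← hcons, hlen]
    · rw [pos'_rsucc rest a 0 hs, hpos]
      simp

theorem iter_bounded (e K : ℕ) (he : 1 ≤ e) : ∀ m, m + 1 ≤ Nat.choose (K + e) e →
    ∀ x ∈ rsucc^[m] (List.replicate e 0), x ≤ K := by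
  intro m
  induction m with
  | zero =>
    intro _ x hx
    simp at hx
    omega
  | succ m ih =>
    intro hm
    rw [Function.iterate_succ_apply']
    obtain ⟨hs, hlen, hpos⟩ := iter_facts e he m
    apply rsucc_bounded hs (ih (by omega))
    intro hrep
    rw [hlen] at hrep
    have h := pos'_replicate e K 0
    simp at h
    rw [hrep] at hpos
    omega

theorem rsucc_append : ∀ (l : List ℕ) (K : ℕ), l ≠ [] → l.Pairwise (· ≤ ·) →
    (∀ x ∈ l, x ≤ K) → l ≠ List.replicate l.length K →
    rsucc (l ++ [K]) = rsucc l ++ [K] := by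
  intro l
  induction l with
  | nil => intro K h; exact absurd rfl h
  | cons a rest ih =>
    intro K _ hs hb hne
    cases rest with
    | nil =>
      have haK : a < K := by
        have := hb a (by simp)
        rcases Nat.lt_or_ge a K with h | h
        · exact h
        · exfalso; apply hne; have h2 : a = K := by omega
          simp [h2]
      show rsucc [a, K] = [a+1, K]
      rw [rsucc, if_pos haK]
    | cons b r =>
      by_cases hlt : a < b
      · show rsucc (a :: b :: (r ++ [K])) = rsucc (a :: b :: r) ++ [K]
        rw [rsucc, if_pos hlt, rsucc, if_pos hlt]
        simp
      · have hab : a = b := le_antisymm ((List.pairwise_cons.mp hs).1 b (by simp)) (by omega)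
        have hbne : (b :: r) ≠ List.replicate (b :: r).length K := by
          intro hc
          apply hne
          have hlen : (b :: r).length = r.length + 1 := by simp
          rw [hlen, List.replicate_succ] at hc
          obtain ⟨hbK, hr⟩ := List.cons.inj hc
          have hlen2 : (a :: b :: r).length = r.length + 2 := by simp
          rw [hlen2]
          rw [show r.length + 2 = (r.length+1)+1 from rfl, List.replicate_succ, List.replicate_succ]
          subst hab hbK
          rw [← hr]
        show rsucc (a :: b :: (r ++ [K])) = rsucc (a :: b :: r) ++ [K]
        rw [rsucc, if_neg hlt, rsucc, if_neg hlt]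
        have := ih K (by simp) (List.pairwise_cons.mp hs).2
          (fun y hy => hb y (List.mem_cons_of_mem _ hy)) hbne
        show 0 :: rsucc ((b :: r) ++ [K]) = (0 :: rsucc (b :: r)) ++ [K]
        rw [this]
        simp

theorem iter_append (e K : ℕ) (he : 1 ≤ e) : ∀ m, m + 1 ≤ Nat.choose (K + e) e →
    rsucc^[m] (List.replicate e 0 ++ [K]) = rsucc^[m] (List.replicate e 0) ++ [K] := by
  intro m
  induction m with
  | zero => intro _; rfl
  | succ m ih =>
    intro hm
    rw [Function.iterate_succ_apply', Function.iterate_succ_apply', ih (by omega)]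
    obtain ⟨hs, hlen, hpos⟩ := iter_facts e he m
    have hne : rsucc^[m] (List.replicate e 0) ≠ [] := by
      intro h; rw [h] at hlen; simp at hlen; omega
    apply rsucc_append _ _ hne hs (iter_bounded e K he m (by omega))
    intro hrep
    rw [hlen] at hrep
    have h := pos'_replicate e K 0
    simp at h
    rw [hrep] at hpos
    omega

theorem rsucc_replicate (k : ℕ) : ∀ e, 1 ≤ e →
    rsucc (List.replicate e k) = List.replicate (e-1) 0 ++ [k+1] := by
  intro e
  induction e with
  | zero => omega
  | succ e ih =>
    intro _
    cases e with
    | zero => simp [rsucc]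
    | succ e' =>
      have h := ih (by omega)
      rw [List.replicate_succ, List.replicate_succ]
      rw [rsucc, if_neg (by omega)]
      rw [← List.replicate_succ, h]
      simp [List.replicate_succ]

theorem iter_reaches : ∀ d, 1 ≤ d → ∀ k,
    rsucc^[Nat.choose (k + d) d - 1] (List.replicate d 0) = List.replicate d k := by
  intro d
  induction d with
  | zero => omega
  | succ e ihd =>
    intro _ k
    induction k with
    | zero => simp
    | succ k ihk =>
      have hpos1 : 1 ≤ Nat.choose (k + (e+1)) (e+1) := Nat.choose_pos (by omega)
      have hpos2 : 1 ≤ Nat.choose (k + (e+1)) e := Nat.choose_pos (by omega)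
      have hpascal : Nat.choose (k + 1 + (e+1)) (e+1)
          = Nat.choose (k + (e+1)) e + Nat.choose (k + (e+1)) (e+1) := by
        rw [show k + 1 + (e+1) = (k + (e+1)) + 1 from by omega, Nat.choose_succ_succ,
          Nat.succ_eq_add_one]
      have hsplit : Nat.choose (k + 1 + (e+1)) (e+1) - 1
          = (Nat.choose (k + (e+1)) e - 1) + (1 + (Nat.choose (k + (e+1)) (e+1) - 1)) := by
        omega
      rw [hsplit, Function.iterate_add_apply, Function.iterate_add_apply,
        Function.iterate_one, ihk]
      rw [rsucc_replicate k (e+1) (by omega)]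
      simp only [Nat.add_sub_cancel]
      cases e with
      | zero =>
        simp
      | succ e' =>
        have hB : Nat.choose (k + (e'+1+1)) (e'+1) - 1 + 1 ≤ Nat.choose ((k+1) + (e'+1)) (e'+1) := by
          have h1 : k + (e'+1+1) = (k+1) + (e'+1) := by omega
          have h2 : 1 ≤ Nat.choose ((k+1) + (e'+1)) (e'+1) := Nat.choose_pos (by omega)
          rw [h1]
          omega
        rw [iter_append (e'+1) (k+1) (by omega) _ hB]
        have := ihd (by omega) (k+1)
        rw [show k + (e'+1+1) = (k+1) + (e'+1) from by omega, this]
        rw [← List.replicate_succ']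

theorem pow_le_factorial_mul_choose : ∀ (d b : ℕ), (b+1)^d ≤ d.factorial * Nat.choose (b + d) d := by
  intro d
  induction d with
  | zero => simp
  | succ d ih =>
    intro b
    have key : Nat.choose (b + d + 1) (d+1) * (d+1) = (b + d + 1) * Nat.choose (b + d) d := by
      have h := Nat.add_one_mul_choose_eq (b + d) d
      omega
    calc (b+1)^(d+1) = (b+1)^d * (b+1) := by ring
      _ ≤ (d.factorial * Nat.choose (b + d) d) * (b+1) := Nat.mul_le_mul_right _ (ih b)
      _ ≤ (d.factorial * Nat.choose (b + d) d) * (b+d+1) := Nat.mul_le_mul_left _ (by omega)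
      _ = d.factorial * (Nat.choose (b + d + 1) (d+1) * (d+1)) := by rw [key]; ring
      _ = (d+1).factorial * Nat.choose (b + (d+1)) (d+1) := by
          rw [Nat.factorial_succ, show b + (d+1) = b + d + 1 from by omega]; ring

theorem choose_le_pow : ∀ (d k : ℕ), Nat.choose (k + d + 1) d ≤ (k+2)^d := by
  intro d
  induction d with
  | zero => simp
  | succ d ih =>
    intro k
    have key : Nat.choose (k + d + 2) (d+1) * (d+1) = (k + d + 2) * Nat.choose (k + d + 1) d := by
      have h := Nat.add_one_mul_choose_eq (k + d + 1) d
      rw [show k + d + 2 = k + d + 1 + 1 from by omega]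
      omega
    have h3 : Nat.choose (k + (d+1) + 1) (d+1) * (d+1) ≤ (k+2)^(d+1) * (d+1) := by
      rw [show k + (d+1) + 1 = k + d + 2 from by omega, key]
      calc (k + d + 2) * Nat.choose (k + d + 1) d
          ≤ ((k+2) * (d+1)) * (k+2)^d := Nat.mul_le_mul (by nlinarith) (ih k)
        _ = (k+2)^(d+1) * (d+1) := by ring
    exact Nat.le_of_mul_le_mul_right h3 (by omega)

theorem succd_iter (d m : ℕ) :
    succd^[m] (zeroTuple d) = (rsucc^[m] (List.replicate d 0)).reverse := by
  induction m with
  | zero => simp [zeroTuple, List.reverse_replicate]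
  | succ m ih =>
    rw [Function.iterate_succ_apply', Function.iterate_succ_apply', ih, succd,
      List.reverse_reverse]

theorem sized_bounds (d : ℕ) (hd : 1 ≤ d) (n : ℕ) :
    (d : ℝ) * (n : ℝ) ^ ((1 : ℝ) / (d : ℝ)) - 2 * (d : ℝ) ≤ (sized d n : ℝ) ∧
    (sized d n : ℝ) ≤
      (d : ℝ) * (Nat.factorial d : ℝ) ^ ((1 : ℝ) / (d : ℝ)) * (n : ℝ) ^ ((1 : ℝ) / (d : ℝ))
        + (d : ℝ) := by
  have hd0 : (d : ℝ) ≠ 0 := by positivity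
  constructor
  · -- lower bound
    set P : ℕ → Prop := fun k => Nat.choose (k + d) d ≤ n + 1 with hP
    have hP0 : P 0 := by
      show Nat.choose (0 + d) d ≤ n + 1
      rw [Nat.zero_add, Nat.choose_self]; omega
    set k := Nat.findGreatest P (n+1) with hk
    have hPk : Nat.choose (k + d) d ≤ n + 1 := Nat.findGreatest_spec (Nat.zero_le _) hP0
    have hCk : k + 1 ≤ Nat.choose (k + d) d := by
      calc k + 1 = Nat.choose (k + 1) k := (Nat.choose_succ_self_right k).symm
        _ ≤ Nat.choose (k + d) k := Nat.choose_le_choose k (by omega)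
        _ = Nat.choose (k + d) d := by
            have h := Nat.choose_symm (show d ≤ k + d by omega)
            simpa using h
    have hkn : k ≤ n := by omega
    have hnot : ¬ P (k+1) :=
      Nat.findGreatest_is_greatest (show k < k + 1 by omega) (show k + 1 ≤ n + 1 by omega)
    have hnot' : ¬ (Nat.choose (k + 1 + d) d ≤ n + 1) := hnot
    have hn2 : n + 1 < Nat.choose (k + d + 1) d := by
      rw [show k + d + 1 = k + 1 + d from by omega]; omega
    have hle : n ≤ (k+2)^d := by
      have h := choose_le_pow d k
      omega
    have hval : (succd^[Nat.choose (k + d) d - 1] (zeroTuple d)).sum = d * k := by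
      rw [succd_iter, iter_reaches d hd k]
      simp [List.sum_replicate]
    have hsup : d * k ≤ sized d n := by
      rw [← hval]
      unfold sized
      exact Finset.le_sup (f := fun m => (succd^[m] (zeroTuple d)).sum)
        (Finset.mem_range.mpr (by omega))
    have hreal : (n:ℝ) ^ ((1:ℝ)/(d:ℝ)) ≤ (k:ℝ) + 2 := by
      have h1 : (n:ℝ) ≤ ((k:ℝ)+2)^(d:ℕ) := by
        calc (n:ℝ) ≤ (((k+2)^d : ℕ) : ℝ) := by exact_mod_cast hle
          _ = ((k:ℝ)+2)^(d:ℕ) := by push_cast; ring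
      calc (n:ℝ)^((1:ℝ)/(d:ℝ)) ≤ (((k:ℝ)+2)^(d:ℕ))^((1:ℝ)/(d:ℝ)) :=
            Real.rpow_le_rpow (by positivity) h1 (by positivity)
        _ = ((k:ℝ)+2) := by
            rw [← Real.rpow_natCast ((k:ℝ)+2) d, ← Real.rpow_mul (by positivity),
              mul_one_div, div_self hd0, Real.rpow_one]
    have hd1 : (0:ℝ) ≤ (d:ℝ) := by positivity
    calc (d:ℝ) * (n:ℝ)^((1:ℝ)/(d:ℝ)) - 2*(d:ℝ)
        ≤ (d:ℝ) * ((k:ℝ)+2) - 2*(d:ℝ) :=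
          sub_le_sub_right (mul_le_mul_of_nonneg_left hreal hd1) _
      _ = (d:ℝ) * (k:ℝ) := by ring
      _ ≤ ((sized d n : ℕ) : ℝ) := by exact_mod_cast hsup
  · -- upper bound
    obtain ⟨m, hmem, hsupeq⟩ := Finset.exists_mem_eq_sup (Finset.range (n+1))
      (by simp) (fun m => (succd^[m] (zeroTuple d)).sum)
    have hmn : m ≤ n := by
      have := Finset.mem_range.mp hmem
      omega
    have hval : sized d n = (rsucc^[m] (List.replicate d 0)).sum := by
      rw [sized, hsupeq, succd_iter, List.sum_reverse]
    obtain ⟨hs, hlen, hpos⟩ := iter_facts d hd m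
    have hne : rsucc^[m] (List.replicate d 0) ≠ [] := by
      intro h; rw [h] at hlen; simp at hlen; omega
    obtain ⟨a, rest, hcons⟩ := List.exists_cons_of_ne_nil hne
    rw [hcons] at hs hlen hpos hval
    set x := (a :: rest).getLast (by simp) with hx
    have hsum : (a :: rest).sum ≤ d * x := by
      have h := sum_le_length_mul_getLast rest a hs
      rw [hlen] at h
      exact h
    have hrl : rest.length = d - 1 := by
      simp only [List.length_cons] at hlen; omega
    have hposge := pos'_ge_last rest a 0
    have e1 : x + 0 + rest.length = x + (d-1) := by omega
    have e2 : 0 + rest.length + 1 = d := by omega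
    rw [← hx, e1, e2] at hposge
    have hchoose : Nat.choose (x + (d-1)) d ≤ n := by omega
    rcases Nat.eq_zero_or_pos x with hx0 | hx1
    · rw [hval]
      have h0 : (a :: rest).sum = 0 := by
        rw [hx0, Nat.mul_zero] at hsum
        omega
      rw [h0]
      push_cast
      positivity
    · have hfac : x ^ d ≤ d.factorial * n := by
        have h1 := pow_le_factorial_mul_choose d (x-1)
        rw [show x - 1 + d = x + (d-1) from by omega, show x - 1 + 1 = x from by omega] at h1
        calc x ^ d ≤ d.factorial * Nat.choose (x + (d-1)) d := h1
          _ ≤ d.factorial * n := Nat.mul_le_mul_left _ hchoose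
      have hxr : (x:ℝ) ≤ ((d.factorial : ℝ))^((1:ℝ)/(d:ℝ)) * (n:ℝ)^((1:ℝ)/(d:ℝ)) := by
        have h1 : ((x:ℝ))^(d:ℕ) ≤ (d.factorial : ℝ) * (n:ℝ) := by exact_mod_cast hfac
        calc (x:ℝ) = (((x:ℝ))^(d:ℕ))^((1:ℝ)/(d:ℝ)) := by
              rw [← Real.rpow_natCast (x:ℝ) d, ← Real.rpow_mul (by positivity),
                mul_one_div, div_self hd0, Real.rpow_one]
          _ ≤ ((d.factorial : ℝ) * (n:ℝ))^((1:ℝ)/(d:ℝ)) :=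
              Real.rpow_le_rpow (by positivity) h1 (by positivity)
          _ = ((d.factorial : ℝ))^((1:ℝ)/(d:ℝ)) * (n:ℝ)^((1:ℝ)/(d:ℝ)) :=
              Real.mul_rpow (by positivity) (by positivity)
      rw [hval]
      have hsr : ((a :: rest).sum : ℝ) ≤ (d:ℝ) * (x:ℝ) := by exact_mod_cast hsum
      calc ((a :: rest).sum : ℝ) ≤ (d:ℝ) * (x:ℝ) := hsr
        _ ≤ (d:ℝ) * (((d.factorial : ℝ))^((1:ℝ)/(d:ℝ)) * (n:ℝ)^((1:ℝ)/(d:ℝ))) :=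
            mul_le_mul_of_nonneg_left hxr (by positivity)
        _ = (d:ℝ) * (d.factorial : ℝ)^((1:ℝ)/(d:ℝ)) * (n:ℝ)^((1:ℝ)/(d:ℝ)) := by ring
        _ ≤ (d:ℝ) * (d.factorial : ℝ)^((1:ℝ)/(d:ℝ)) * (n:ℝ)^((1:ℝ)/(d:ℝ)) + (d:ℝ) :=
            le_add_of_nonneg_right (by positivity)

end CounterValues
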